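/- Let (K_i)_{i∈ℕ} be an i.i.d. sequence with P(K_1 = k) = (1/c)·k^{-5/4} on the positive integers. Then almost surely all record-times from some index onward are simple, i.e., there exists i_0 such that for every record-time i ≥ i_0, K_i > K_j for all j < i. -/

import Mathlib

open MeasureTheory ENNReal ProbabilityTheory Filter
open scoped NNReal
set_option maxHeartbeats 1000000

lemma geom_deriv_le (r : ℝ≥0∞) : ∑' n : ℕ, ((n + 1 : ℕ) : ℝ≥0∞) * r ^ n ≤ (1 - r)⁻¹ ^ 2 := by
  have h1 : ∑' n : ℕ, ((n + 1 : ℕ) : ℝ≥0∞) * r ^ n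
      = ∑' x : Σ n : ℕ, Fin (n + 1), r ^ x.1 := by
    rw [ENNReal.tsum_sigma']
    refine tsum_congr fun n => ?_
    simp [tsum_fintype, Finset.sum_const, nsmul_eq_mul]
  rw [h1]
  have h2 : ∀ x : Σ n : ℕ, Fin (n + 1),
      r ^ x.1 = (fun p : ℕ × ℕ => r ^ p.1 * r ^ p.2) ((x.2 : ℕ), x.1 - (x.2 : ℕ)) := by
    rintro ⟨n, a⟩
    simp only
    rw [← pow_add, Nat.add_sub_cancel' (Nat.lt_succ_iff.mp a.isLt)]
  calc ∑' x : Σ n : ℕ, Fin (n + 1), r ^ x.1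
      = ∑' x : Σ n : ℕ, Fin (n + 1),
        (fun p : ℕ × ℕ => r ^ p.1 * r ^ p.2) ((x.2 : ℕ), x.1 - (x.2 : ℕ)) := tsum_congr h2
    _ ≤ ∑' p : ℕ × ℕ, r ^ p.1 * r ^ p.2 := by
        refine ENNReal.tsum_comp_le_tsum_of_injective ?_ _
        rintro ⟨n, a⟩ ⟨m, b⟩ h
        simp only [Prod.mk.injEq] at h
        have hn : n = m := by
          have := h.2
          have ha := Nat.lt_succ_iff.mp a.isLt
          have hb := Nat.lt_succ_iff.mp b.isLt
          omega
        subst hn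
        simp only [Sigma.mk.inj_iff, heq_eq_eq, true_and]
        exact Fin.ext h.1
    _ = (1 - r)⁻¹ ^ 2 := by
        rw [ENNReal.tsum_prod']
        simp_rw [ENNReal.tsum_mul_left, ENNReal.tsum_geometric, sq]
        rw [ENNReal.tsum_mul_right, ENNReal.tsum_geometric]

lemma sum_inv_sq_ne_top : ∑' k : ℕ, (((k + 1 : ℕ) : ℝ≥0∞) ^ 2)⁻¹ ≠ ⊤ := by
  have hco : ∀ k : ℕ, (((k + 1 : ℕ) : ℝ≥0∞) ^ 2)⁻¹
      = ((((k + 1 : ℕ) : ℝ≥0) ^ 2)⁻¹ : ℝ≥0) := by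
    intro k
    rw [← ENNReal.coe_natCast, ← ENNReal.coe_pow, ← ENNReal.coe_inv (by positivity)]
  rw [tsum_congr hco, ENNReal.tsum_coe_ne_top_iff_summable]
  rw [← NNReal.summable_coe]
  have : ∀ k : ℕ, ((((((k + 1 : ℕ) : ℝ≥0) ^ 2)⁻¹ : ℝ≥0)) : ℝ) = 1 / ((k + 1 : ℕ) : ℝ) ^ 2 := by
    intro k; push_cast; ring
  rw [funext this]
  exact (summable_nat_add_iff 1).mpr (Real.summable_one_div_nat_pow.mpr one_lt_two)

lemma tsum_rpow_ne_top {y : ℝ} (hy : 1 < y) :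
    ∑' j : ℕ, ((j + 1 : ℕ) : ℝ≥0∞) ^ (-y) ≠ ⊤ := by
  have hco : ∀ j : ℕ, ((j + 1 : ℕ) : ℝ≥0∞) ^ (-y)
      = ((((j + 1 : ℕ) : ℝ≥0) ^ (-y) : ℝ≥0) : ℝ≥0∞) := by
    intro j
    rw [← ENNReal.coe_natCast, ← ENNReal.coe_rpow_of_ne_zero (by positivity)]
  rw [tsum_congr hco, ENNReal.tsum_coe_ne_top_iff_summable, ← NNReal.summable_coe]
  have : ∀ j : ℕ, ((((j + 1 : ℕ) : ℝ≥0) ^ (-y) : ℝ≥0) : ℝ) = 1 / ((j + 1 : ℕ) : ℝ) ^ y := by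
    intro j
    rw [NNReal.coe_rpow, Real.rpow_neg (by positivity), one_div]
    norm_num
  rw [funext this]
  exact (summable_nat_add_iff 1).mpr (Real.summable_one_div_nat_rpow.mpr hy)

theorem stmt_2 {Ω : Type*} [MeasurableSpace Ω] (μ : Measure Ω) [IsProbabilityMeasure μ]
    (c : ℝ≥0∞) (hc : c = ∑' j : ℕ, ((j + 1 : ℕ) : ℝ≥0∞) ^ (-(5/4 : ℝ)))
    (K : ℕ → Ω → ℕ) (hmeas : ∀ i, Measurable (K i))
    (hindep : iIndepFun K μ)
    (hpos : ∀ i, ∀ᵐ ω ∂μ, 1 ≤ K i ω)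
    (hlaw : ∀ i k, μ {ω | K i ω = k + 1} = c⁻¹ * ((k + 1 : ℕ) : ℝ≥0∞) ^ (-(5/4 : ℝ))) :
    ∀ᵐ ω ∂μ, ∃ i₀, ∀ i ≥ i₀, (∀ j < i, K j ω ≤ K i ω) → (∀ j < i, K j ω < K i ω) := by
  -- basic facts about c
  have hc1 : (1 : ℝ≥0∞) ≤ c := by
    rw [hc]
    calc (1 : ℝ≥0∞) = ((0 + 1 : ℕ) : ℝ≥0∞) ^ (-(5/4 : ℝ)) := by norm_num
      _ ≤ _ := ENNReal.le_tsum 0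
  have hc0 : c ≠ 0 := by intro h; rw [h] at hc1; exact (not_le.mpr zero_lt_one) hc1
  have hcT : c ≠ ⊤ := by rw [hc]; exact tsum_rpow_ne_top (by norm_num)
  have hcinv0 : c⁻¹ ≠ 0 := by simp [hcT]
  have hcinvT : c⁻¹ ≠ ⊤ := by simp [hc0]
  -- the law
  set p : ℕ → ℝ≥0∞ := fun k => μ (K 0 ⁻¹' {k}) with hp_def
  have hsetOf : ∀ (i k : ℕ), K i ⁻¹' {k} = {ω | K i ω = k} := by
    intro i k; ext ω; simp [Set.mem_preimage]
  have hNull : ∀ i, μ (K i ⁻¹' {0}) = 0 := by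
    intro i
    have h := hpos i
    rw [ae_iff] at h
    refine measure_mono_null ?_ h
    intro ω hω
    simp only [Set.mem_preimage, Set.mem_singleton_iff] at hω
    simp [hω]
  have hpk : ∀ i k, μ (K i ⁻¹' {k}) = p k := by
    intro i k
    cases k with
    | zero => rw [hNull i, hp_def]; exact (hNull 0).symm
    | succ m =>
      rw [hp_def]
      simp only
      rw [hsetOf i, hsetOf 0, hlaw i m, hlaw 0 m]
  have hpS : ∀ m : ℕ, p (m + 1) = c⁻¹ * ((m + 1 : ℕ) : ℝ≥0∞) ^ (-(5/4 : ℝ)) := by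
    intro m
    rw [hp_def]; simp only; rw [hsetOf 0, hlaw 0 m]
  have hp0 : p 0 = 0 := by rw [hp_def]; exact hNull 0
  -- the cdf
  set F : ℕ → ℝ≥0∞ := fun k => ∑ m ∈ Finset.range (k + 1), p m with hF_def
  have hF_def' : ∀ k, F k = ∑ m ∈ Finset.range (k + 1), p m := fun k => rfl
  have hFk : ∀ i k, μ (K i ⁻¹' {n | n ≤ k}) = F k := by
    intro i k
    have hU : K i ⁻¹' {n | n ≤ k} = ⋃ m ∈ Finset.range (k + 1), K i ⁻¹' {m} := by
      ext ω; simp [Nat.lt_succ_iff]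
    rw [hU, measure_biUnion_finset ?_ fun m _ => (hmeas i) (measurableSet_singleton m)]
    · exact Finset.sum_congr rfl fun m _ => hpk i m
    · intro a _ b _ hab
      refine Set.disjoint_left.mpr fun ω ha hb => hab ?_
      simp only [Set.mem_preimage, Set.mem_singleton_iff] at ha hb
      rw [← ha, ← hb]
  have hF_le_one : ∀ k, F k ≤ 1 := fun k => (hFk 0 k) ▸ prob_le_one
  have hF_ne_top : ∀ k, F k ≠ ⊤ := fun k => (lt_of_le_of_lt (hF_le_one k) one_lt_top).ne
  -- total mass
  have hTot : ∑' k, p k = 1 := by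
    have hU : (Set.univ : Set Ω) = ⋃ k : ℕ, K 0 ⁻¹' {k} := by
      ext ω; simp
    have hdisj : Pairwise (Function.onFun Disjoint fun k : ℕ => K 0 ⁻¹' {k}) := by
      intro a b hab
      refine Set.disjoint_left.mpr fun ω ha hb => hab ?_
      simp only [Set.mem_preimage, Set.mem_singleton_iff] at ha hb
      rw [← ha, ← hb]
    have hmu := measure_iUnion (μ := μ) hdisj (fun k => (hmeas 0) (measurableSet_singleton k))
    rw [hp_def, ← hmu, ← hU, measure_univ]
  -- tail
  have htail : ∀ k, 1 - F k = ∑' m, p (m + (k + 1)) := by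
    intro k
    have hsplit : (∑ m ∈ Finset.range (k + 1), p m) + ∑' m, p (m + (k + 1)) = ∑' m, p m :=
      Summable.sum_add_tsum_nat_add' ENNReal.summable
    rw [hTot] at hsplit
    rw [← hF_def'] at hsplit
    rw [← hsplit, ENNReal.add_sub_cancel_left (hF_ne_top k)]
  -- antitonicity of p on positives
  have hpmono : ∀ a b : ℕ, a ≤ b → p (b + 1) ≤ p (a + 1) := by
    intro a b hab
    rw [hpS a, hpS b]
    refine mul_le_mul_right ?_ _
    rw [ENNReal.rpow_neg, ENNReal.rpow_neg]
    refine ENNReal.inv_le_inv.mpr ?_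
    exact ENNReal.rpow_le_rpow (by exact_mod_cast Nat.succ_le_succ hab) (by norm_num)
  -- tail lower bound
  have htail_ge : ∀ k : ℕ, ((k + 1 : ℕ) : ℝ≥0∞) * p (2 * k + 2) ≤ 1 - F k := by
    intro k
    rw [htail k]
    calc ((k + 1 : ℕ) : ℝ≥0∞) * p (2 * k + 2)
        = ∑ _m ∈ Finset.range (k + 1), p (2 * k + 2) := by
          rw [Finset.sum_const, Finset.card_range, nsmul_eq_mul]
      _ ≤ ∑ m ∈ Finset.range (k + 1), p (m + (k + 1)) := by
          refine Finset.sum_le_sum fun m hm => ?_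
          have hm' : m ≤ k := Nat.lt_succ_iff.mp (Finset.mem_range.mp hm)
          have h1 : m + (k + 1) = (m + k) + 1 := by ring
          have h2 : 2 * k + 2 = (2 * k + 1) + 1 := by ring
          rw [h1, h2]
          exact hpmono (m + k) (2 * k + 1) (by omega)
      _ ≤ ∑' m, p (m + (k + 1)) := ENNReal.sum_le_tsum _
  -- independence product for the bad events
  have hprod : ∀ i j k : ℕ, j < i →
      μ (⋂ m ∈ Finset.range (i + 1),
          K m ⁻¹' (if m = i ∨ m = j then ({k} : Set ℕ) else {n | n ≤ k}))
        = p k ^ 2 * F k ^ (i - 1) := by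
    intro i j k hj
    have hmeasb : ∀ m ∈ Finset.range (i + 1),
        MeasurableSet[MeasurableSpace.comap (K m) inferInstance]
          (K m ⁻¹' (if m = i ∨ m = j then ({k} : Set ℕ) else {n | n ≤ k})) :=
      fun m _ => ⟨_, MeasurableSet.of_discrete, rfl⟩
    rw [hindep.meas_biInter hmeasb]
    have hi_mem : i ∈ Finset.range (i + 1) := Finset.self_mem_range_succ i
    have hj_mem : j ∈ (Finset.range (i + 1)).erase i := by
      rw [Finset.mem_erase]
      exact ⟨Nat.ne_of_lt hj, Finset.mem_range.mpr (by omega)⟩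
    rw [← Finset.mul_prod_erase _ _ hi_mem, ← Finset.mul_prod_erase _ _ hj_mem]
    have h1 : μ (K i ⁻¹' (if i = i ∨ i = j then ({k} : Set ℕ) else {n | n ≤ k})) = p k := by
      rw [if_pos (Or.inl rfl)]; exact hpk i k
    have h2 : μ (K j ⁻¹' (if j = i ∨ j = j then ({k} : Set ℕ) else {n | n ≤ k})) = p k := by
      rw [if_pos (Or.inr rfl)]; exact hpk j k
    have h3 : ∏ m ∈ ((Finset.range (i + 1)).erase i).erase j,
        μ (K m ⁻¹' (if m = i ∨ m = j then ({k} : Set ℕ) else {n | n ≤ k})) = F k ^ (i - 1) := by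
      rw [Finset.prod_congr rfl (g := fun _ => F k) ?_, Finset.prod_const]
      · congr 1
        rw [Finset.card_erase_of_mem hj_mem, Finset.card_erase_of_mem hi_mem,
          Finset.card_range]
        omega
      · intro m hm
        rw [Finset.mem_erase] at hm
        obtain ⟨hmj, hm2⟩ := hm
        rw [Finset.mem_erase] at hm2
        rw [if_neg (by tauto)]
        exact hFk m k
    rw [h1, h2, h3]; ring
  -- the bad events
  set A : ℕ → Set Ω := fun i =>
    {ω | ∃ j, j < i ∧ (∀ m, m < i → K m ω ≤ K i ω) ∧ K i ω ≤ K j ω} with hA_def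
  have hA_bound : ∀ i : ℕ, μ (A i) ≤ ∑' k, (i : ℝ≥0∞) * (p k ^ 2 * F k ^ (i - 1)) := by
    intro i
    have hsub : A i ⊆ ⋃ k : ℕ, ⋃ j ∈ Finset.range i, ⋂ m ∈ Finset.range (i + 1),
        K m ⁻¹' (if m = i ∨ m = j then ({k} : Set ℕ) else {n | n ≤ k}) := by
      rintro ω ⟨j, hj, hle, hge⟩
      refine Set.mem_iUnion.mpr ⟨K i ω, ?_⟩
      refine Set.mem_iUnion₂.mpr ⟨j, Finset.mem_range.mpr hj, ?_⟩
      refine Set.mem_iInter₂.mpr fun m hm => ?_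
      by_cases h : m = i ∨ m = j
      · rw [Set.mem_preimage, if_pos h, Set.mem_singleton_iff]
        rcases h with rfl | rfl
        · rfl
        · exact le_antisymm (hle m hj) hge
      · rw [Set.mem_preimage, if_neg h]
        push_neg at h
        have hmi : m < i := by
          have := Finset.mem_range.mp hm; omega
        exact hle m hmi
    calc μ (A i) ≤ μ (⋃ k : ℕ, ⋃ j ∈ Finset.range i, ⋂ m ∈ Finset.range (i + 1),
          K m ⁻¹' (if m = i ∨ m = j then ({k} : Set ℕ) else {n | n ≤ k})) := measure_mono hsub
      _ ≤ ∑' k : ℕ, μ (⋃ j ∈ Finset.range i, ⋂ m ∈ Finset.range (i + 1),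
          K m ⁻¹' (if m = i ∨ m = j then ({k} : Set ℕ) else {n | n ≤ k})) := measure_iUnion_le _
      _ ≤ ∑' k : ℕ, ∑ j ∈ Finset.range i, μ (⋂ m ∈ Finset.range (i + 1),
          K m ⁻¹' (if m = i ∨ m = j then ({k} : Set ℕ) else {n | n ≤ k})) :=
          ENNReal.tsum_le_tsum fun k => measure_biUnion_finset_le _ _
      _ = ∑' k : ℕ, ∑ j ∈ Finset.range i, p k ^ 2 * F k ^ (i - 1) :=
          tsum_congr fun k => Finset.sum_congr rfl fun j hjm =>
            hprod i j k (Finset.mem_range.mp hjm)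
      _ = ∑' k, (i : ℝ≥0∞) * (p k ^ 2 * F k ^ (i - 1)) := by
          refine tsum_congr fun k => ?_
          rw [Finset.sum_const, Finset.card_range, nsmul_eq_mul]
  -- geometric series bound
  have hgeom : ∀ k : ℕ, ∑' i : ℕ, (i : ℝ≥0∞) * F k ^ (i - 1) ≤ (1 - F k)⁻¹ ^ 2 := by
    intro k
    rw [tsum_eq_zero_add' ENNReal.summable]
    simp only [Nat.cast_zero, zero_mul, zero_add, Nat.add_sub_cancel]
    exact geom_deriv_le (F k)
  have hsum_le : ∑' i, μ (A i) ≤ ∑' k, p k ^ 2 * (1 - F k)⁻¹ ^ 2 := by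
    calc ∑' i, μ (A i) ≤ ∑' (i : ℕ), ∑' (k : ℕ), (i : ℝ≥0∞) * (p k ^ 2 * F k ^ (i - 1)) :=
          ENNReal.tsum_le_tsum hA_bound
      _ = ∑' (k : ℕ), ∑' (i : ℕ), (i : ℝ≥0∞) * (p k ^ 2 * F k ^ (i - 1)) := ENNReal.tsum_comm
      _ = ∑' k, p k ^ 2 * ∑' i : ℕ, (i : ℝ≥0∞) * F k ^ (i - 1) := by
          refine tsum_congr fun k => ?_
          calc ∑' (i : ℕ), (i : ℝ≥0∞) * (p k ^ 2 * F k ^ (i - 1))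
              = ∑' (i : ℕ), p k ^ 2 * ((i : ℝ≥0∞) * F k ^ (i - 1)) :=
                tsum_congr fun i => by ring
            _ = p k ^ 2 * ∑' i : ℕ, (i : ℝ≥0∞) * F k ^ (i - 1) := ENNReal.tsum_mul_left
      _ ≤ ∑' k, p k ^ 2 * (1 - F k)⁻¹ ^ 2 :=
          ENNReal.tsum_le_tsum fun k => mul_le_mul_right (hgeom k) _
  -- the summable bound
  set D : ℝ≥0∞ := (4 : ℝ≥0∞) ^ (5/4 : ℝ) with hD_def
  have hDT : D ≠ ⊤ := ENNReal.rpow_ne_top_of_nonneg (by norm_num) (by norm_num)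
  have hD0 : D ≠ 0 := (ENNReal.rpow_pos (by norm_num) (by norm_num)).ne'
  have hterm : ∀ k : ℕ, p k ^ 2 * (1 - F k)⁻¹ ^ 2 ≤ D ^ 2 * (((k + 1 : ℕ) : ℝ≥0∞) ^ 2)⁻¹ := by
    intro k
    have key : p k * (1 - F k)⁻¹ ≤ D * (((k + 1 : ℕ) : ℝ≥0∞))⁻¹ := by
      cases k with
      | zero => rw [hp0, zero_mul]; exact zero_le
      | succ m =>
        have hQ0 : p (2 * (m + 1) + 2) ≠ 0 := by
          have h24 : 2 * (m + 1) + 2 = (2 * m + 3) + 1 := by ring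
          rw [h24, hpS (2 * m + 3)]
          exact mul_ne_zero hcinv0
            (ENNReal.rpow_pos (by exact_mod_cast Nat.succ_pos (2 * m + 3))
              (ENNReal.natCast_ne_top _)).ne'
        have hQT : p (2 * (m + 1) + 2) ≠ ⊤ := by
          have h24 : 2 * (m + 1) + 2 = (2 * m + 3) + 1 := by ring
          rw [h24, hpS (2 * m + 3)]
          refine ENNReal.mul_ne_top hcinvT ?_
          rw [ENNReal.rpow_neg]
          exact ENNReal.inv_ne_top.mpr
            (ENNReal.rpow_pos (by exact_mod_cast Nat.succ_pos (2 * m + 3))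
              (ENNReal.natCast_ne_top _)).ne'
        have hstep : p (m + 1) ≤ D * p (2 * (m + 1) + 2) := by
          have h24 : 2 * (m + 1) + 2 = (2 * m + 3) + 1 := by ring
          rw [h24, hpS m, hpS (2 * m + 3), mul_comm D, mul_assoc]
          refine mul_le_mul_right ?_ _
          -- (m+1)^(-5/4) ≤ (2m+4)^(-5/4) * D
          have hident : ((2 * m + 3 + 1 : ℕ) : ℝ≥0∞) ^ (-(5/4 : ℝ)) * D
              ≥ (((m + 1 : ℕ) : ℝ≥0∞)) ^ (-(5/4 : ℝ)) := by
            have h4 : (((m + 1 : ℕ) : ℝ≥0∞)) ^ (-(5/4 : ℝ))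
                = ((4 : ℝ≥0∞) * ((m + 1 : ℕ) : ℝ≥0∞)) ^ (-(5/4 : ℝ)) * D := by
              rw [ENNReal.mul_rpow_of_ne_top (by norm_num) (by simp), hD_def]
              rw [ENNReal.rpow_neg 4, mul_comm ((4 : ℝ≥0∞) ^ (5/4 : ℝ))⁻¹, mul_assoc,
                ENNReal.inv_mul_cancel (ENNReal.rpow_pos (by norm_num) (by norm_num)).ne'
                  (ENNReal.rpow_ne_top_of_nonneg (by norm_num) (by norm_num)), mul_one]
            rw [h4]
            refine mul_le_mul_left ?_ D
            rw [ENNReal.rpow_neg, ENNReal.rpow_neg]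
            refine ENNReal.inv_le_inv.mpr (ENNReal.rpow_le_rpow ?_ (by norm_num))
            rw [show ((4 : ℝ≥0∞)) = ((4 : ℕ) : ℝ≥0∞) by norm_num, ← Nat.cast_mul]
            exact_mod_cast (by omega : 2 * m + 3 + 1 ≤ 4 * (m + 1))
          exact hident
        calc p (m + 1) * (1 - F (m + 1))⁻¹
            ≤ p (m + 1) * (((m + 1 + 1 : ℕ) : ℝ≥0∞) * p (2 * (m + 1) + 2))⁻¹ :=
              mul_le_mul_right (ENNReal.inv_le_inv.mpr (htail_ge (m + 1))) _
          _ = p (m + 1) * (p (2 * (m + 1) + 2))⁻¹ * (((m + 1 + 1 : ℕ) : ℝ≥0∞))⁻¹ := by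
              rw [ENNReal.mul_inv (Or.inl (by exact_mod_cast Nat.succ_ne_zero (m + 1)))
                (Or.inl (by simp))]
              ring
          _ ≤ D * (((m + 1 + 1 : ℕ) : ℝ≥0∞))⁻¹ := by
              refine mul_le_mul_left ?_ _
              calc p (m + 1) * (p (2 * (m + 1) + 2))⁻¹
                  ≤ D * p (2 * (m + 1) + 2) * (p (2 * (m + 1) + 2))⁻¹ :=
                    mul_le_mul_left hstep _
                _ = D := by
                    rw [mul_assoc, ENNReal.mul_inv_cancel hQ0 hQT, mul_one]
    calc p k ^ 2 * (1 - F k)⁻¹ ^ 2 = (p k * (1 - F k)⁻¹) ^ 2 := by rw [mul_pow]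
      _ ≤ (D * (((k + 1 : ℕ) : ℝ≥0∞))⁻¹) ^ 2 := by
          exact pow_le_pow_left' key 2
      _ = D ^ 2 * (((k + 1 : ℕ) : ℝ≥0∞) ^ 2)⁻¹ := by rw [mul_pow, ← ENNReal.inv_pow]
  have hfin : ∑' i, μ (A i) ≠ ⊤ := by
    have h1 : ∑' i, μ (A i) ≤ D ^ 2 * ∑' k : ℕ, (((k + 1 : ℕ) : ℝ≥0∞) ^ 2)⁻¹ := by
      rw [← ENNReal.tsum_mul_left]
      exact hsum_le.trans (ENNReal.tsum_le_tsum hterm)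
    exact ne_top_of_le_ne_top (ENNReal.mul_ne_top (ENNReal.pow_ne_top hDT) sum_inv_sq_ne_top) h1
  -- Borel-Cantelli and conclusion
  have hBC := MeasureTheory.ae_eventually_notMem (μ := μ) hfin
  filter_upwards [hBC] with ω hω
  rw [Filter.eventually_atTop] at hω
  obtain ⟨i₀, hi₀⟩ := hω
  refine ⟨i₀, fun i hi hrec j hj => ?_⟩
  by_contra hlt
  refine hi₀ i hi ?_
  simp only [hA_def, Set.mem_setOf_eq]
  exact ⟨j, hj, fun m hm => hrec m hm, not_lt.mp hlt⟩
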